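/- Suppose a continuous function m : [1,∞) → (0,∞) satisfies, for all t ≥ 1 and s ≥ 0, m_{t+s}² · s ≤ m_t - m_{t+s} ≤ m_t² · s, and m_1 = 1. Then m_t = 1/t for all t ≥ 1. -/

import Mathlib

set_option maxHeartbeats 1000000 in
/-- If a continuous positive function `m` on `[1,∞)` satisfies `m 1 = 1` and, for all
`t ≥ 1` and `s ≥ 0`, `m(t+s)² s ≤ m t - m(t+s) ≤ m t² s`, then `m t = 1/t` on `[1,∞)`. -/
theorem stmt6 (m : ℝ → ℝ) (hc : ContinuousOn m (Set.Ici 1))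
    (hpos : ∀ t : ℝ, 1 ≤ t → 0 < m t) (h1 : m 1 = 1)
    (hineq : ∀ t : ℝ, 1 ≤ t → ∀ s : ℝ, 0 ≤ s →
      (m (t + s))^2 * s ≤ m t - m (t + s) ∧ m t - m (t + s) ≤ (m t)^2 * s) :
    ∀ t : ℝ, 1 ≤ t → m t = 1/t := by
  have mono : ∀ a b : ℝ, 1 ≤ a → a ≤ b → m b ≤ m a := by
    intro a b ha hab
    have h := (hineq a ha (b - a) (by linarith)).1
    have hb : (1:ℝ) ≤ b := le_trans ha hab
    have hpb := hpos b hb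
    have : a + (b - a) = b := by ring
    rw [this] at h
    nlinarith [sq_nonneg (m b)]
  have hm1 : ∀ a : ℝ, 1 ≤ a → m a ≤ 1 := by
    intro a ha
    have := mono 1 a le_rfl ha
    linarith [h1 ▸ this]
  intro t ht
  have hmt := hpos t ht
  -- key local estimate for f x = 1/m x - x
  have key : ∀ a s : ℝ, 1 ≤ a → 0 ≤ s → a + s ≤ t →
      |(1 / m (a + s) - (a + s)) - (1 / m a - a)| ≤ s ^ 2 / m t := by
    intro a s ha hs hat
    have ha' : (1:ℝ) ≤ a + s := by linarith
    set p := m a with hp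
    set q := m (a + s) with hq
    set r := m t with hr
    have hpa : 0 < p := hpos a ha
    have hpas : 0 < q := hpos (a + s) ha'
    have hub : p - q ≤ p ^ 2 * s := (hineq a ha s hs).2
    have hlb : q ^ 2 * s ≤ p - q := (hineq a ha s hs).1
    have hms : r ≤ q := mono (a + s) t ha' hat
    have hma1 : p ≤ 1 := hm1 a ha
    have hE : (1 / q - (a + s)) - (1 / p - a) = 1 / q - 1 / p - s := by ring
    rw [hE, abs_le]
    have hden : (0:ℝ) < p * q * r := by positivity
    have hqp : q ≤ p := by nlinarith [sq_nonneg q]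
    have hr1 : r ≤ 1 := by linarith
    have A1 : r * (q ^ 2 * s) ≤ r * (p - q) := mul_le_mul_of_nonneg_left hlb hmt.le
    have A2 : r * (p - q) ≤ r * (p ^ 2 * s) := mul_le_mul_of_nonneg_left hub hmt.le
    have B : (s * q * r) * (p - q) ≤ (s * q * r) * (p ^ 2 * s) :=
      mul_le_mul_of_nonneg_left hub (by positivity)
    have B2 : (s * p * r) * (p - q) ≤ (s * p * r) * (p ^ 2 * s) :=
      mul_le_mul_of_nonneg_left hub (by positivity)
    have hpr1 : p * r ≤ 1 := by nlinarith
    have C : s ^ 2 * (p * q) * (p * r) ≤ s ^ 2 * (p * q) * 1 :=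
      mul_le_mul_of_nonneg_left hpr1 (by positivity)
    have hp2 : p ^ 2 ≤ 1 := by nlinarith
    have hp2r : p ^ 2 * r ≤ q := by nlinarith [mul_le_mul_of_nonneg_right hp2 hmt.le]
    have C2 : (s ^ 2 * p) * (p ^ 2 * r) ≤ (s ^ 2 * p) * q :=
      mul_le_mul_of_nonneg_left hp2r (by positivity)
    have h1' : -(s ^ 2 * (p * q)) ≤ r * (p - q) - s * p * q * r := by nlinarith [A1, B, C]
    have h2' : r * (p - q) - s * p * q * r ≤ s ^ 2 * (p * q) := by nlinarith [A2, B2, C2]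
    constructor
    · have e : 1 / q - 1 / p - s - (-(s ^ 2 / r)) =
          (r * (p - q) - s * p * q * r + s ^ 2 * (p * q)) / (p * q * r) := by
        field_simp
        ring
      have hnum : 0 ≤ r * (p - q) - s * p * q * r + s ^ 2 * (p * q) := by linarith
      have := div_nonneg hnum hden.le
      linarith [e ▸ this]
    · have e : s ^ 2 / r - (1 / q - 1 / p - s) =
          (s ^ 2 * (p * q) - (r * (p - q) - s * p * q * r)) / (p * q * r) := by
        field_simp
      have hnum : 0 ≤ s ^ 2 * (p * q) - (r * (p - q) - s * p * q * r) := by linarith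
      have := div_nonneg hnum hden.le
      linarith [e ▸ this]
  -- telescoping estimate
  have main : ∀ n : ℕ, 1 ≤ n → |1 / m t - t - (1 / m 1 - 1)| ≤ (t - 1) ^ 2 / (n * m t) := by
    intro n hn
    have hn0 : (0:ℝ) < n := by exact_mod_cast hn
    set h : ℝ := (t - 1) / n with hh
    have hh0 : 0 ≤ h := div_nonneg (by linarith) hn0.le
    set g : ℕ → ℝ := fun k => 1 / m (1 + k * h) - (1 + k * h) with hg
    have hxk : ∀ k : ℕ, k ≤ n → 1 + (k:ℝ) * h ≤ t := by
      intro k hk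
      have : (k:ℝ) * h ≤ n * h := by
        apply mul_le_mul_of_nonneg_right _ hh0
        exact_mod_cast hk
      have hnh : (n:ℝ) * h = t - 1 := by
        rw [hh]; field_simp
      linarith
    have hxn : 1 + (n:ℝ) * h = t := by
      rw [hh]; field_simp; ring
    have tel : g n - g 0 = ∑ k ∈ Finset.range n, (g (k + 1) - g k) :=
      (Finset.sum_range_sub g n).symm
    have hbound : ∀ k ∈ Finset.range n, |g (k + 1) - g k| ≤ h ^ 2 / m t := by
      intro k hk
      have hk' : k + 1 ≤ n := Finset.mem_range.mp hk
      have ha : (1:ℝ) ≤ 1 + (k:ℝ) * h := by nlinarith [hh0, Nat.cast_nonneg (α := ℝ) k]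
      have hat : (1 + (k:ℝ) * h) + h ≤ t := by
        have := hxk (k + 1) hk'
        push_cast at this
        linarith
      have := key (1 + (k:ℝ) * h) h ha hh0 hat
      have e1 : (1 + (k:ℝ) * h) + h = 1 + ((k:ℕ) + 1 : ℕ) * h := by push_cast; ring
      rw [e1] at this
      simpa [hg] using this
    have habs : |g n - g 0| ≤ n * (h ^ 2 / m t) := by
      rw [tel]
      calc |∑ k ∈ Finset.range n, (g (k + 1) - g k)|
          ≤ ∑ k ∈ Finset.range n, |g (k + 1) - g k| := Finset.abs_sum_le_sum_abs _ _
        _ ≤ ∑ _k ∈ Finset.range n, h ^ 2 / m t := Finset.sum_le_sum hbound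
        _ = n * (h ^ 2 / m t) := by
            rw [Finset.sum_const, Finset.card_range, nsmul_eq_mul]
    have e2 : g n - g 0 = 1 / m t - t - (1 / m 1 - 1) := by
      simp only [hg, Nat.cast_zero, zero_mul, add_zero, hxn]
    have e3 : (n:ℝ) * (h ^ 2 / m t) = (t - 1) ^ 2 / (n * m t) := by
      rw [hh]; field_simp
    rw [e2, e3] at habs
    exact habs
  -- conclude f t = 0
  have hf1 : 1 / m 1 - 1 = 0 := by rw [h1]; norm_num
  have hft : 1 / m t - t = 0 := by
    by_contra hne
    have habs : 0 < |1 / m t - t| := abs_pos.mpr (by simpa [hf1] using hne)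
    obtain ⟨n, hn⟩ := exists_nat_gt ((t - 1) ^ 2 / (m t * |1 / m t - t|))
    have hn1 : 1 ≤ n := by
      by_contra hcon
      push_neg at hcon
      interval_cases n
      · simp at hn
        have h0 : 0 ≤ (t - 1) ^ 2 / (m t * |1 / m t - t|) := by positivity
        rw [one_div] at h0
        linarith
    have hmain := main n hn1
    rw [hf1, sub_zero] at hmain
    have hn0 : (0:ℝ) < n := by exact_mod_cast hn1
    have : (t - 1) ^ 2 / (n * m t) < |1 / m t - t| := by
      rw [div_lt_iff₀ (by positivity)]
      have := (div_lt_iff₀ (by positivity)).mp hn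
      nlinarith [habs, hmt]
    linarith
  have : 1 / m t = t := by linarith
  field_simp at this ⊢
  linarith
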